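/- Let p be an odd prime and let n, k be positive integers with gcd(n,k) = d. Suppose k/d is odd and n/d is even. Then the image of the map y ↦ y^(p^d) + y on F_{p^n} equals the image of the map y ↦ y^(p^k) + y on F_{p^n}. -/

import Mathlib

open Polynomial Finset

private lemma pow_pow_mul_self {F : Type*} [Monoid F] (P a : ℕ) (y : F)
    (h : y ^ P ^ a = y) : ∀ c, y ^ P ^ (a * c) = y := by
  intro c
  induction c with
  | zero => simp
  | succ c ih =>
      have he : P ^ (a * (c + 1)) = P ^ (a * c) * P ^ a := by
        rw [← pow_add]; ring_nf
      rw [he, pow_mul, ih, h]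

private lemma pow_pow_gcd {F : Type*} [Monoid F] (P : ℕ) :
    ∀ a b : ℕ, ∀ y : F, y ^ P ^ a = y → y ^ P ^ b = y → y ^ P ^ Nat.gcd a b = y := by
  intro a b
  induction a, b using Nat.gcd.induction with
  | H0 b => intro y _ h2; simpa using h2
  | H1 a b ha ih =>
      intro y h1 h2
      rw [Nat.gcd_rec]
      refine ih y ?_ h1
      have hb : P ^ b = P ^ (a * (b / a)) * P ^ (b % a) := by
        rw [← pow_add]
        congr 1
        exact (Nat.div_add_mod b a).symm
      calc y ^ P ^ (b % a) = (y ^ P ^ (a * (b / a))) ^ P ^ (b % a) := by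
             rw [pow_pow_mul_self P a y h1]
        _ = y ^ P ^ b := by rw [← pow_mul, ← hb]
        _ = y := h2

private lemma card_zeros_le {F : Type*} [Field F] (P : F[X]) (hP : P ≠ 0) :
    {x : F | P.eval x = 0}.ncard ≤ P.natDegree := by
  classical
  have hsub : {x : F | P.eval x = 0} ⊆ (P.roots.toFinset : Set F) := by
    intro x hx
    simp only [Set.mem_setOf_eq] at hx
    exact Finset.mem_coe.mpr (Multiset.mem_toFinset.mpr ((mem_roots hP).mpr hx))
  calc {x : F | P.eval x = 0}.ncard ≤ (P.roots.toFinset : Set F).ncard :=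
        Set.ncard_le_ncard hsub (Set.toFinite _)
    _ = P.roots.toFinset.card := by rw [Set.ncard_coe_finset]
    _ ≤ Multiset.card P.roots := Multiset.toFinset_card_le _
    _ ≤ P.natDegree := P.card_roots'

theorem stmt_1 (p n k d : ℕ) (hp : p.Prime) (hodd : Odd p) (hn : 0 < n) (hk : 0 < k)
    (hd : Nat.gcd n k = d) (hkd : Odd (k / d)) (hnd : Even (n / d))
    (F : Type*) [Field F] [Fintype F] (hF : Fintype.card F = p ^ n) :
    Set.range (fun y : F => y ^ p ^ d + y) =
      Set.range (fun y : F => y ^ p ^ k + y) := by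
  haveI : Fact p.Prime := ⟨hp⟩
  -- characteristic
  haveI hchar : CharP F p := by
    obtain ⟨r, hr⟩ := CharP.exists F
    haveI := hr
    obtain ⟨s, hrprime, hcard⟩ := FiniteField.card F r
    have hrp : r = p := by
      have h1 : p ∣ r ^ (s : ℕ) := by
        rw [← hcard, hF]; exact dvd_pow_self p hn.ne'
      have := (Nat.Prime.dvd_of_dvd_pow hp h1)
      exact ((Nat.prime_dvd_prime_iff_eq hp hrprime).mp this).symm
    rwa [hrp] at hr
  -- basic divisibility
  have hdn : d ∣ n := hd ▸ Nat.gcd_dvd_left n k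
  have hdk : d ∣ k := hd ▸ Nat.gcd_dvd_right n k
  have hdpos : 0 < d := hd ▸ Nat.gcd_pos_of_pos_left k hn
  set m := n / d with hm
  set t := k / d with ht
  have hnm : n = d * m := (Nat.mul_div_cancel' hdn).symm
  have hkt : k = d * t := (Nat.mul_div_cancel' hdk).symm
  have hmpos : 0 < m := Nat.div_pos (Nat.le_of_dvd hn hdn) hdpos
  set q := p ^ d with hq
  clear_value q
  have hq1 : 1 < q := hq ▸ Nat.one_lt_pow hdpos.ne' hp.one_lt
  -- Frobenius facts
  have frob : ∀ (a b : F) (j : ℕ), (a + b) ^ q ^ j = a ^ q ^ j + b ^ q ^ j := by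
    intro a b j
    have : q ^ j = p ^ (d * j) := by rw [hq, pow_mul]
    rw [this, add_pow_char_pow]
  have hpowcard : ∀ x : F, x ^ q ^ m = x := by
    intro x
    have : q ^ m = p ^ n := by rw [hq, ← pow_mul, ← hnm]
    rw [this, ← hF, FiniteField.pow_card]
  -- the alternating trace: T x = sum_{i<m} (-1)^i x^(q^i)
  have key_shift : ∀ y : F,
      ∑ i ∈ range m, (-1 : F) ^ i * y ^ q ^ (i + 1)
        = -∑ i ∈ range m, (-1 : F) ^ i * y ^ q ^ i := by
    intro y
    have h2 := Finset.sum_range_succ (fun i => (-1 : F) ^ i * y ^ q ^ i) m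
    have h1 := Finset.sum_range_succ' (fun i => (-1 : F) ^ i * y ^ q ^ i) m
    have hfm : (-1 : F) ^ m * y ^ q ^ m = (-1 : F) ^ 0 * y ^ q ^ 0 := by
      rw [hnd.neg_one_pow, hpowcard]; norm_num
    rw [h2, hfm] at h1
    have h3 : ∑ i ∈ range m, (-1 : F) ^ (i + 1) * y ^ q ^ (i + 1)
        = ∑ i ∈ range m, (-1 : F) ^ i * y ^ q ^ i := by
      have := h1.symm
      simpa using this
    calc ∑ i ∈ range m, (-1 : F) ^ i * y ^ q ^ (i + 1)
        = -∑ i ∈ range m, (-1 : F) ^ (i + 1) * y ^ q ^ (i + 1) := by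
          rw [← Finset.sum_neg_distrib]
          refine Finset.sum_congr rfl fun i _ => ?_
          rw [pow_succ]; ring
      _ = -∑ i ∈ range m, (-1 : F) ^ i * y ^ q ^ i := by rw [h3]
  have key_t : ∀ (s : ℕ) (y : F),
      ∑ i ∈ range m, (-1 : F) ^ i * y ^ q ^ (i + s)
        = (-1 : F) ^ s * ∑ i ∈ range m, (-1 : F) ^ i * y ^ q ^ i := by
    intro s
    induction s with
    | zero => intro y; simp
    | succ s ih =>
        intro y
        have h1 : ∀ i : ℕ, y ^ q ^ (i + (s + 1)) = (y ^ q) ^ q ^ (i + s) := by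
          intro i
          rw [← pow_mul]
          congr 1
          rw [← pow_succ']
          try congr 1
          try omega
        have h2 : ∑ i ∈ range m, (-1 : F) ^ i * y ^ q ^ (i + (s + 1))
            = ∑ i ∈ range m, (-1 : F) ^ i * (y ^ q) ^ q ^ (i + s) := by
          exact Finset.sum_congr rfl fun i _ => by rw [h1]
        have h4 : ∑ i ∈ range m, (-1 : F) ^ i * (y ^ q) ^ q ^ i
            = ∑ i ∈ range m, (-1 : F) ^ i * y ^ q ^ (i + 1) := by
          refine Finset.sum_congr rfl fun i _ => ?_
          rw [← pow_mul]
          congr 2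
          rw [← pow_succ']
          try congr 1
          try omega
        rw [h2, ih (y ^ q), h4, key_shift y, pow_succ]
        ring
  have hS_comp : ∀ (s : ℕ) (y : F),
      ∑ i ∈ range m, (-1 : F) ^ i * (y ^ q ^ s + y) ^ q ^ i
        = ((-1 : F) ^ s + 1) * ∑ i ∈ range m, (-1 : F) ^ i * y ^ q ^ i := by
    intro s y
    have expand : ∑ i ∈ range m, (-1 : F) ^ i * (y ^ q ^ s + y) ^ q ^ i
        = ∑ i ∈ range m, ((-1 : F) ^ i * y ^ q ^ (i + s) + (-1 : F) ^ i * y ^ q ^ i) := by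
      refine Finset.sum_congr rfl fun i _ => ?_
      rw [frob, ← pow_mul, ← pow_add]
      rw [Nat.add_comm s i]
      ring
    rw [expand, Finset.sum_add_distrib, key_t s y]
    ring
  -- membership of both ranges in the zero set Z
  set Z : Set F := {x : F | ∑ i ∈ range m, (-1 : F) ^ i * x ^ q ^ i = 0} with hZ
  have hsub_d : Set.range (fun y : F => y ^ p ^ d + y) ⊆ Z := by
    rintro _ ⟨y, rfl⟩
    have hqe : (fun y : F => y ^ p ^ d + y) y = y ^ q ^ 1 + y := by
      simp [hq]
    rw [Set.mem_setOf_eq, hqe, hS_comp 1 y]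
    simp
  have hsub_k : Set.range (fun y : F => y ^ p ^ k + y) ⊆ Z := by
    rintro _ ⟨y, rfl⟩
    have hqe : (fun y : F => y ^ p ^ k + y) y = y ^ q ^ t + y := by
      simp only [hq, ← pow_mul, ← hkt]
    rw [Set.mem_setOf_eq, hqe, hS_comp t y, hkd.neg_one_pow]
    ring
  -- cardinality of Z
  have hndd : d * (m - 1) = n - d := by
    have h5 : d * (m - 1) + d = n := by
      have hmm : m - 1 + 1 = m := Nat.succ_pred_eq_of_pos hmpos
      calc d * (m - 1) + d = d * ((m - 1) + 1) := by ring
        _ = d * m := by rw [hmm]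
        _ = n := hnm.symm
    omega
  have hZcard : Z.ncard ≤ p ^ (n - d) := by
    classical
    set P : F[X] := ∑ i ∈ range m, C ((-1 : F) ^ i) * X ^ q ^ i with hP
    have heval : ∀ x : F, P.eval x = ∑ i ∈ range m, (-1 : F) ^ i * x ^ q ^ i := by
      intro x
      rw [hP, eval_finset_sum]
      simp
    have hcoeff : P.coeff (q ^ (m - 1)) = (-1 : F) ^ (m - 1) := by
      rw [hP, finset_sum_coeff]
      rw [Finset.sum_eq_single (m - 1)]
      · rw [coeff_C_mul, coeff_X_pow, if_pos rfl, mul_one]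
      · intro i hi hne
        have hne' : ¬ (q ^ (m - 1) = q ^ i) := fun h =>
          hne (Nat.pow_right_injective hq1 h).symm
        rw [coeff_C_mul, coeff_X_pow, if_neg hne', mul_zero]
      · intro h
        exact absurd (Finset.mem_range.mpr (by omega)) h
    have hPne : P ≠ 0 := fun h => by
      rw [h, coeff_zero] at hcoeff
      exact (pow_ne_zero _ (neg_ne_zero.mpr (one_ne_zero))) hcoeff.symm
    have hdeg : P.natDegree ≤ q ^ (m - 1) := by
      refine (natDegree_sum_le _ _).trans ?_
      rw [Finset.fold_max_le]
      refine ⟨Nat.zero_le _, fun i hi => ?_⟩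
      refine (natDegree_C_mul_le _ _).trans ?_
      rw [natDegree_X_pow]
      exact Nat.pow_le_pow_right (Nat.one_le_of_lt hq1)
        (by have := Finset.mem_range.mp hi; omega)
    have hZeq : Z = {x : F | P.eval x = 0} := by
      ext x; simp [hZ, heval]
    rw [hZeq]
    calc {x : F | P.eval x = 0}.ncard ≤ P.natDegree := card_zeros_le P hPne
      _ ≤ q ^ (m - 1) := hdeg
      _ = p ^ (n - d) := by rw [hq, ← pow_mul, hndd]
  -- kernel analysis
  have hdlen : d ≤ n := Nat.le_of_dvd hn hdn
  set K : Set F := {y : F | y ^ p ^ d + y = 0} with hK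
  have hker_k : {y : F | y ^ p ^ k + y = 0} ⊆ K := by
    intro y hy
    simp only [Set.mem_setOf_eq] at hy
    show y ^ p ^ d + y = 0
    have hyk : y ^ p ^ k = -y := eq_neg_of_add_eq_zero_left hy
    have h2k : y ^ p ^ (2 * k) = y := by
      have he : p ^ (2 * k) = p ^ k * p ^ k := by rw [← pow_add]; congr 1; ring
      rw [he, pow_mul, hyk, (hodd.pow (n := k)).neg_pow, hyk, neg_neg]
    have hyn : y ^ p ^ n = y := by rw [← hF, FiniteField.pow_card]
    have hco : Nat.Coprime m t := by
      have := Nat.coprime_div_gcd_div_gcd (m := n) (n := k) (hd ▸ hdpos)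
      rwa [hd] at this
    have hgcd2 : Nat.gcd (2 * k) n = 2 * d := by
      have h1 : Nat.gcd (2 * k) n = d * Nat.gcd (2 * t) m := by
        rw [hkt, hnm, show 2 * (d * t) = d * (2 * t) by ring, Nat.gcd_mul_left]
      have h2 : Nat.gcd (2 * t) m = 2 := by
        have hdvd2 : 2 ∣ Nat.gcd (2 * t) m :=
          Nat.dvd_gcd ⟨t, rfl⟩ hnd.two_dvd
        have hle : Nat.gcd (2 * t) m ∣ 2 := by
          have hstep : Nat.gcd (2 * t) m ∣ Nat.gcd (2 * t) (2 * m) :=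
            Nat.dvd_gcd (Nat.gcd_dvd_left _ _)
              ((Nat.gcd_dvd_right _ _).trans (dvd_mul_left m 2))
          rwa [Nat.gcd_mul_left, Nat.Coprime.gcd_eq_one hco.symm, mul_one] at hstep
        exact Nat.dvd_antisymm hle hdvd2
      rw [h1, h2]; ring
    have h2d : y ^ p ^ (2 * d) = y := by
      have := pow_pow_gcd p (2 * k) n y h2k hyn
      rwa [hgcd2] at this
    have hodd_pow : ∀ j : ℕ, y ^ p ^ (d * (2 * j + 1)) = y ^ p ^ d := by
      intro j
      induction j with
      | zero => norm_num
      | succ j ih =>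
          have he : p ^ (d * (2 * (j + 1) + 1)) = p ^ (2 * d) * p ^ (d * (2 * j + 1)) := by
            rw [← pow_add]; congr 1; ring
          rw [he, pow_mul, h2d]
          exact ih
    obtain ⟨j, hj⟩ := hkd
    have hkey : y ^ p ^ k = y ^ p ^ d := by
      rw [hkt, hj]
      exact hodd_pow j
    rw [← hkey, hyk]
    ring
  -- cardinality of K
  have hKcard : K.ncard ≤ p ^ d := by
    classical
    set Q : F[X] := X ^ p ^ d + X with hQ
    have hQne : Q ≠ 0 := by
      intro h
      have hc : Q.coeff (p ^ d) = 1 := by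
        rw [hQ, coeff_add, coeff_X_pow, if_pos rfl, coeff_X,
          if_neg (by have := hp.two_le; have : 2 ≤ p ^ d := hq ▸ hq1; omega)]
        norm_num
      rw [h, coeff_zero] at hc
      exact one_ne_zero hc.symm
    have hQdeg : Q.natDegree ≤ p ^ d := by
      refine (natDegree_add_le _ _).trans ?_
      rw [natDegree_X_pow, natDegree_X]
      have : 1 ≤ p ^ d := Nat.one_le_pow _ _ hp.pos
      omega
    have hKsub : K = {x : F | Q.eval x = 0} := by
      ext x; simp [hK, hQ]
    rw [hKsub]
    exact (card_zeros_le Q hQne).trans hQdeg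
  -- lower bound for ranges
  have hrange : ∀ e : ℕ, {y : F | y ^ p ^ e + y = 0}.ncard ≤ p ^ d →
      p ^ (n - d) ≤ (Set.range (fun y : F => y ^ p ^ e + y)).ncard := by
    intro e hker
    set φ : F →+ F :=
      { toFun := fun y => y ^ p ^ e + y
        map_zero' := by
          show (0 : F) ^ p ^ e + 0 = 0
          rw [zero_pow (pow_pos hp.pos e).ne', add_zero]
        map_add' := by
          intro a b
          show (a + b) ^ p ^ e + (a + b) = (a ^ p ^ e + a) + (b ^ p ^ e + b)
          rw [add_pow_char_pow]
          ring } with hφ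
    have hcard_eq : Nat.card F = Nat.card (F ⧸ φ.ker) * Nat.card φ.ker :=
      AddSubgroup.card_eq_card_quotient_mul_card_addSubgroup φ.ker
    have hquot : Nat.card (F ⧸ φ.ker) = Nat.card φ.range :=
      Nat.card_congr (QuotientAddGroup.quotientKerEquivRange φ).toEquiv
    have hker_set : (φ.ker : Set F) = {y : F | y ^ p ^ e + y = 0} := by
      ext y
      simp [AddMonoidHom.mem_ker, hφ]
    have hrange_set : (φ.range : Set F) = Set.range (fun y : F => y ^ p ^ e + y) := by
      ext y
      simp [AddMonoidHom.mem_range, hφ, Set.mem_range]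
    have hkc : Nat.card φ.ker ≤ p ^ d := by
      have heq : Nat.card φ.ker = {y : F | y ^ p ^ e + y = 0}.ncard := by
        calc Nat.card φ.ker = Nat.card ((φ.ker : Set F)) := rfl
          _ = ((φ.ker : Set F)).ncard := Nat.card_coe_set_eq _
          _ = {y : F | y ^ p ^ e + y = 0}.ncard := by rw [hker_set]
      rw [heq]; exact hker
    have hrc : Nat.card φ.range = (Set.range (fun y : F => y ^ p ^ e + y)).ncard := by
      calc Nat.card φ.range = Nat.card ((φ.range : Set F)) := rfl
        _ = ((φ.range : Set F)).ncard := Nat.card_coe_set_eq _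
        _ = _ := by rw [hrange_set]
    have hmul : Nat.card φ.range * Nat.card φ.ker = p ^ n := by
      rw [← hquot, ← hcard_eq, Nat.card_eq_fintype_card, hF]
    have hpd_pos : 0 < p ^ d := pow_pos hp.pos d
    have hineq : p ^ (n - d) * p ^ d ≤ Nat.card φ.range * p ^ d := by
      calc p ^ (n - d) * p ^ d = p ^ n := by rw [← pow_add]; congr 1; omega
        _ = Nat.card φ.range * Nat.card φ.ker := hmul.symm
        _ ≤ Nat.card φ.range * p ^ d := Nat.mul_le_mul_left _ hkc
    have := Nat.le_of_mul_le_mul_right hineq hpd_pos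
    rwa [hrc] at this
  have hKk : {y : F | y ^ p ^ k + y = 0}.ncard ≤ p ^ d :=
    (Set.ncard_le_ncard hker_k (Set.toFinite _)).trans hKcard
  have hrd := hrange d hKcard
  have hrk := hrange k hKk
  have hd_eq : Set.range (fun y : F => y ^ p ^ d + y) = Z :=
    Set.eq_of_subset_of_ncard_le hsub_d (hZcard.trans hrd) (Set.toFinite _)
  have hk_eq : Set.range (fun y : F => y ^ p ^ k + y) = Z :=
    Set.eq_of_subset_of_ncard_le hsub_k (hZcard.trans hrk) (Set.toFinite _)
  rw [hq]
  rw [hd_eq, hk_eq]
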